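/- arXiv:0711.2057 — 2 statements merged into one kernel-verified Lean document; each statement's English description precedes it below -/
import Mathlib

section
/- Let A be a commutative Banach algebra with a bounded approximate identity, and let M be a Banach A-module on which the approximate identity acts as an approximate identity (i.e., e_α · m → m for all m ∈ M). Then every element of M factors as a · m with a ∈ A and m ∈ M (Cohen factorization). -/
open Filter

open Unitization

set_option linter.unusedSectionVars false


set_option linter.unusedSectionVars false

noncomputable section CohenAux

variable {A : Type*} [NonUnitalNormedCommRing A] [NormedSpace ℂ A]
    [IsScalarTower ℂ A A] [SMulCommClass ℂ A A] [CompleteSpace A]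

abbrev CohenB (A : Type*) [NonUnitalNormedCommRing A] [NormedSpace ℂ A]
    [IsScalarTower ℂ A A] [SMulCommClass ℂ A A] : Type _ :=
  WithLp 1 (Unitization ℂ A)

def fstB (x : CohenB A) : ℂ := (WithLp.equiv 1 (Unitization ℂ A) x).fst
def sndB (x : CohenB A) : A := (WithLp.equiv 1 (Unitization ℂ A) x).snd
def inrB (a : A) : CohenB A := (WithLp.equiv 1 (Unitization ℂ A)).symm a

theorem fstB_mul (x y : CohenB A) : fstB (x * y) = fstB x * fstB y := rfl
theorem sndB_mul (x y : CohenB A) :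
    sndB (x * y) = fstB x • sndB y + fstB y • sndB x + sndB x * sndB y := rfl
theorem fstB_one : fstB (1 : CohenB A) = 1 := rfl
theorem sndB_one : sndB (1 : CohenB A) = 0 := rfl
theorem fstB_add (x y : CohenB A) : fstB (x + y) = fstB x + fstB y := rfl
theorem sndB_add (x y : CohenB A) : sndB (x + y) = sndB x + sndB y := rfl
theorem fstB_sub (x y : CohenB A) : fstB (x - y) = fstB x - fstB y := rfl
theorem sndB_sub (x y : CohenB A) : sndB (x - y) = sndB x - sndB y := rfl
theorem fstB_smul (z : ℂ) (x : CohenB A) : fstB (z • x) = z * fstB x := rfl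
theorem sndB_smul (z : ℂ) (x : CohenB A) : sndB (z • x) = z • sndB x := rfl
theorem fstB_inr (a : A) : fstB (inrB a) = 0 := rfl
theorem sndB_inr (a : A) : sndB (inrB a) = a := rfl

theorem normB (x : CohenB A) : ‖x‖ = ‖fstB x‖ + ‖sndB x‖ :=
  WithLp.unitization_norm_def x

theorem normB_one : ‖(1 : CohenB A)‖ = 1 := by
  rw [normB, fstB_one, sndB_one]; simp

variable {M : Type*} [NormedAddCommGroup M] [NormedSpace ℂ M]

def TB (act : A →L[ℂ] M →L[ℂ] M) (x : CohenB A) : M →L[ℂ] M :=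
  fstB x • ContinuousLinearMap.id ℂ M + act (sndB x)

variable (act : A →L[ℂ] M →L[ℂ] M)

theorem TB_apply (x : CohenB A) (v : M) : TB act x v = fstB x • v + act (sndB x) v := rfl

theorem TB_one (v : M) : TB act 1 v = v := by
  rw [TB_apply, fstB_one, sndB_one]; simp

theorem TB_mul (hact_mul : ∀ a b : A, act (a * b) = (act a).comp (act b))
    (x y : CohenB A) (v : M) : TB act (x * y) v = TB act x (TB act y v) := by
  simp only [TB_apply, fstB_mul, sndB_mul, map_add, map_smul, hact_mul,
    ContinuousLinearMap.add_apply, ContinuousLinearMap.coe_smul', Pi.smul_apply,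
    ContinuousLinearMap.comp_apply, smul_add, map_smul, smul_smul]
  module

theorem TB_smul (z : ℂ) (x : CohenB A) (v : M) : TB act (z • x) v = z • TB act x v := by
  simp only [TB_apply, fstB_smul, sndB_smul, map_smul, ContinuousLinearMap.coe_smul',
    Pi.smul_apply, smul_add, smul_smul]

theorem TB_sub (x y : CohenB A) (v : M) : TB act (x - y) v = TB act x v - TB act y v := by
  simp only [TB_apply, fstB_sub, sndB_sub, map_sub, ContinuousLinearMap.sub_apply, sub_smul]
  abel

theorem TB_norm (hact_norm : ∀ (a : A) (m : M), ‖act a m‖ ≤ ‖a‖ * ‖m‖)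
    (x : CohenB A) (v : M) : ‖TB act x v‖ ≤ ‖x‖ * ‖v‖ := by
  rw [TB_apply, normB]
  calc ‖fstB x • v + act (sndB x) v‖ ≤ ‖fstB x • v‖ + ‖act (sndB x) v‖ := norm_add_le _ _
    _ ≤ ‖fstB x‖ * ‖v‖ + ‖sndB x‖ * ‖v‖ := by
        gcongr
        · rw [norm_smul]
        · exact hact_norm _ _
    _ = (‖fstB x‖ + ‖sndB x‖) * ‖v‖ := by ring

theorem TB_inr (a : A) (v : M) : TB act (inrB a) v = act a v := by
  rw [TB_apply, fstB_inr, sndB_inr]; simp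


theorem cohen_step {ι : Type*}
    (hact_mul : ∀ a b : A, act (a * b) = (act a).comp (act b))
    (hact_norm : ∀ (a : A) (m : M), ‖act a m‖ ≤ ‖a‖ * ‖m‖)
    (l : Filter ι) [l.NeBot] (e : ι → A) (C : ℝ) (hC : 0 < C) (he : ∀ i, ‖e i‖ ≤ C)
    (hbai : ∀ a : A, Tendsto (fun i => e i * a) l (nhds a))
    (hmod : ∀ m : M, Tendsto (fun i => act (e i) m) l (nhds m))
    (m : M) {α r : ℝ} (hα : α = (2 * (C + 1))⁻¹) (hr : r = 1 - α)
    (n : ℕ) (u : (CohenB A)ˣ)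
    (hu1 : fstB (↑u : CohenB A) = ((r : ℂ)) ^ n)
    (hu2 : ‖((↑u⁻¹ : CohenB A))‖ ≤ 4 ^ n) :
    ∃ u' : (CohenB A)ˣ,
      fstB (↑u' : CohenB A) = ((r : ℂ)) ^ (n + 1) ∧
      ‖((↑u'⁻¹ : CohenB A))‖ ≤ 4 ^ (n + 1) ∧
      ‖sndB (↑u' : CohenB A) - sndB (↑u : CohenB A)‖ ≤ (α * C) * r ^ n ∧
      ‖TB act (↑u'⁻¹ : CohenB A) m - TB act (↑u⁻¹ : CohenB A) m‖ ≤ (1/2) * (1/2) ^ n := by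
  have hCpos : (0:ℝ) < C + 1 := by linarith
  have hα0 : 0 < α := by rw [hα]; positivity
  have hα2 : α * (C + 1) = 1 / 2 := by rw [hα]; field_simp
  have hαhalf : α < 1 / 2 := by
    nlinarith
  have hr0 : 0 < r := by rw [hr]; linarith
  have hr1 : r < 1 := by rw [hr]; linarith
  have hrn : (0:ℝ) < r ^ n := by positivity
  have hrn1 : r ^ n ≤ 1 := pow_le_one₀ hr0.le hr1.le
  set g : CohenB A := (↑u⁻¹ : CohenB A) with hg
  set c : A := sndB g with hc
  set w : M := TB act g m with hw
  -- the first coordinate of the inverse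
  have hfstg : fstB g = ((r : ℂ) ^ n)⁻¹ := by
    have h1 : fstB (↑u : CohenB A) * fstB g = 1 := by
      rw [← fstB_mul, Units.mul_inv, fstB_one]
    rw [hu1] at h1
    exact eq_inv_of_mul_eq_one_right h1
  have hrcn : ‖((r : ℂ) ^ n)‖ = r ^ n := by
    rw [norm_pow, Complex.norm_real, Real.norm_of_nonneg hr0.le]
  have hrcn0 : ((r : ℂ) ^ n) ≠ 0 := by
    intro h; rw [h, norm_zero] at hrcn; exact hrn.ne hrcn
  -- choose the next element of the approximate identity
  have h1 : ∀ᶠ i in l, ‖e i * c - c‖ < 1 / 2 := by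
    have := Metric.tendsto_nhds.mp (hbai c) (1/2) (by norm_num)
    simpa [dist_eq_norm] using this
  have hδ : (0:ℝ) < (1/2) * (1/2) ^ n / (α * r ^ n * 4 ^ (n+1)) := by positivity
  have h2 : ∀ᶠ i in l, ‖act (e i) w - w‖ < (1/2) * (1/2) ^ n / (α * r ^ n * 4 ^ (n+1)) := by
    have := Metric.tendsto_nhds.mp (hmod w) _ hδ
    simpa [dist_eq_norm] using this
  obtain ⟨i, hi1, hi2⟩ := (h1.and h2).exists
  -- the perturbation
  set y : CohenB A := inrB (e i) - 1 with hy
  have hfy : fstB y = -1 := by rw [hy, fstB_sub, fstB_inr, fstB_one]; ring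
  have hsy : sndB y = e i := by rw [hy, sndB_sub, sndB_inr, sndB_one, sub_zero]
  set s : CohenB A := ((α * r ^ n : ℝ) : ℂ) • (g * y) with hs
  have hfgy : fstB (g * y) = -((r : ℂ) ^ n)⁻¹ := by
    rw [fstB_mul, hfstg, hfy]; ring
  have hsgy_norm : ‖sndB (g * y)‖ ≤ (r ^ n)⁻¹ * C + 1 / 2 := by
    have : sndB (g * y) = ((r : ℂ) ^ n)⁻¹ • e i + (e i * c - c) := by
      rw [sndB_mul, hfstg, hfy, hsy, ← hc]
      rw [mul_comm c (e i)]
      module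
    rw [this]
    calc ‖((r : ℂ) ^ n)⁻¹ • e i + (e i * c - c)‖
        ≤ ‖((r : ℂ) ^ n)⁻¹ • e i‖ + ‖e i * c - c‖ := norm_add_le _ _
      _ ≤ (r ^ n)⁻¹ * C + 1 / 2 := by
          refine add_le_add ?_ hi1.le
          rw [norm_smul, norm_inv, hrcn]
          exact mul_le_mul_of_nonneg_left (he i) (by positivity)
  have hgy_norm : ‖g * y‖ ≤ (r ^ n)⁻¹ * (1 + C) + 1 / 2 := by
    rw [normB, hfgy]
    have : ‖-((r : ℂ) ^ n)⁻¹‖ = (r ^ n)⁻¹ := by rw [norm_neg, norm_inv, hrcn]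
    rw [this]
    have := hsgy_norm
    have hinv : (r ^ n)⁻¹ * (1 + C) = (r ^ n)⁻¹ + (r ^ n)⁻¹ * C := by ring
    linarith
  have hrninv : r ^ n * (r ^ n)⁻¹ = 1 := mul_inv_cancel₀ hrn.ne'
  have hs_norm : ‖s‖ ≤ 3 / 4 := by
    rw [hs, norm_smul, Complex.norm_real, Real.norm_of_nonneg (by positivity : (0:ℝ) ≤ α * r ^ n)]
    calc α * r ^ n * ‖g * y‖ ≤ α * r ^ n * ((r ^ n)⁻¹ * (1 + C) + 1 / 2) := by
          gcongr
      _ = α * (C + 1) * (r ^ n * (r ^ n)⁻¹) + α * r ^ n / 2 := by ring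
      _ = 1 / 2 + α * r ^ n / 2 := by rw [hrninv, hα2]; ring
      _ ≤ 3 / 4 := by nlinarith
  have hs1 : ‖-s‖ < 1 := by rw [norm_neg]; linarith
  set v : (CohenB A)ˣ := Units.oneSub (-s) hs1 with hv
  have hvval : (↑v : CohenB A) = 1 + s := by
    rw [hv, Units.val_oneSub, sub_neg_eq_add]
  have hvinv : ‖(↑v⁻¹ : CohenB A)‖ ≤ 4 := by
    have hinvval : (↑v⁻¹ : CohenB A) = ∑' k : ℕ, (-s) ^ k := rfl
    rw [hinvval]
    refine (tsum_geometric_le_of_norm_lt_one _ hs1).trans ?_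
    rw [normB_one, norm_neg]
    have h14 : (1:ℝ)/4 ≤ 1 - ‖s‖ := by linarith
    have : (1 - ‖s‖)⁻¹ ≤ ((1:ℝ)/4)⁻¹ := by
      apply inv_anti₀ (by norm_num) h14
    have h4 : ((1:ℝ)/4)⁻¹ = 4 := by norm_num
    linarith [h4 ▸ this]
  -- basic facts about `u * v`
  have hus : (↑u : CohenB A) * s = ((α * r ^ n : ℝ) : ℂ) • y := by
    rw [hs, mul_smul_comm, ← mul_assoc, hg, Units.mul_inv, one_mul]
  have hdiff : (↑(u * v) : CohenB A) - ↑u = ((α * r ^ n : ℝ) : ℂ) • y := by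
    rw [Units.val_mul, hvval, mul_add, mul_one, add_sub_cancel_left, hus]
  have h_1 : fstB (↑(u * v) : CohenB A) = ((r : ℂ)) ^ (n + 1) := by
    have hfuv : fstB (↑(u * v) : CohenB A)
        = (r : ℂ) ^ n * (1 + ((α * r ^ n : ℝ) : ℂ) * (-((r : ℂ) ^ n)⁻¹)) := by
      rw [Units.val_mul, fstB_mul, hu1, hvval, fstB_add, fstB_one, hs, fstB_smul, hfgy]
    rw [hfuv]
    field_simp
    rw [hr]
    push_cast
    ring
  have h_2 : ‖(↑(u * v)⁻¹ : CohenB A)‖ ≤ 4 ^ (n + 1) := by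
    have hrev : ((u * v)⁻¹ : (CohenB A)ˣ) = v⁻¹ * u⁻¹ := mul_inv_rev u v
    calc ‖(↑(u * v)⁻¹ : CohenB A)‖ = ‖(↑v⁻¹ : CohenB A) * (↑u⁻¹ : CohenB A)‖ := by
          rw [hrev, Units.val_mul]
      _ ≤ ‖(↑v⁻¹ : CohenB A)‖ * ‖(↑u⁻¹ : CohenB A)‖ := norm_mul_le _ _
      _ ≤ 4 * 4 ^ n := by
          refine mul_le_mul hvinv ?_ (norm_nonneg _) (by norm_num)
          rw [← hg]; exact hu2
      _ = 4 ^ (n + 1) := by ring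
  have h_3 : ‖sndB (↑(u * v) : CohenB A) - sndB (↑u : CohenB A)‖ ≤ (α * C) * r ^ n := by
    rw [← sndB_sub, hdiff, sndB_smul, hsy, norm_smul, Complex.norm_real,
      Real.norm_of_nonneg (by positivity : (0:ℝ) ≤ α * r ^ n)]
    calc α * r ^ n * ‖e i‖ ≤ α * r ^ n * C := by
          exact mul_le_mul_of_nonneg_left (he i) (by positivity)
      _ = (α * C) * r ^ n := by ring
  have h_4 : ‖TB act (↑(u * v)⁻¹ : CohenB A) m - TB act (↑u⁻¹ : CohenB A) m‖
      ≤ (1/2) * (1/2) ^ n := by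
    have hinvid : ∀ p q : (CohenB A)ˣ,
        (↑q⁻¹ : CohenB A) - ↑p⁻¹ = ↑q⁻¹ * ((↑p : CohenB A) - ↑q) * ↑p⁻¹ := by
      intro p q
      rw [mul_sub, sub_mul, mul_assoc (↑q⁻¹ : CohenB A) (↑p : CohenB A) (↑p⁻¹ : CohenB A),
        Units.mul_inv, mul_one, Units.inv_mul, one_mul]
    have hneg : (↑u : CohenB A) - ↑(u * v) = (-((α * r ^ n : ℝ) : ℂ)) • y := by
      rw [← neg_sub, hdiff, neg_smul]
    have hd2 : (↑(u * v)⁻¹ : CohenB A) - ↑u⁻¹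
        = (-((α * r ^ n : ℝ) : ℂ)) • ((↑(u * v)⁻¹ : CohenB A) * (y * (↑u⁻¹ : CohenB A))) := by
      rw [hinvid u (u * v), hneg, mul_smul_comm, smul_mul_assoc, mul_assoc]
    have hTy : TB act y w = act (e i) w - w := by
      rw [TB_apply, hfy, hsy]
      module
    have hq : ‖act (e i) w - w‖ ≤ (1/2) * (1/2) ^ n / (α * r ^ n * 4 ^ (n+1)) := hi2.le
    calc ‖TB act (↑(u * v)⁻¹ : CohenB A) m - TB act (↑u⁻¹ : CohenB A) m‖
        = ‖TB act ((↑(u * v)⁻¹ : CohenB A) - ↑u⁻¹) m‖ := by rw [TB_sub]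
      _ = ‖(-((α * r ^ n : ℝ) : ℂ)) •
            TB act (↑(u * v)⁻¹ : CohenB A) (TB act y (TB act (↑u⁻¹ : CohenB A) m))‖ := by
          rw [hd2, TB_smul, TB_mul act hact_mul, TB_mul act hact_mul]
      _ = (α * r ^ n) * ‖TB act (↑(u * v)⁻¹ : CohenB A) (act (e i) w - w)‖ := by
          rw [norm_smul, norm_neg, Complex.norm_real,
            Real.norm_of_nonneg (by positivity : (0:ℝ) ≤ α * r ^ n), ← hg, ← hw, hTy]
      _ ≤ (α * r ^ n) * (4 ^ (n + 1) * ((1/2) * (1/2) ^ n / (α * r ^ n * 4 ^ (n+1)))) := by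
          refine mul_le_mul_of_nonneg_left ?_ (by positivity)
          calc ‖TB act (↑(u * v)⁻¹ : CohenB A) (act (e i) w - w)‖
              ≤ ‖(↑(u * v)⁻¹ : CohenB A)‖ * ‖act (e i) w - w‖ := TB_norm act hact_norm _ _
            _ ≤ 4 ^ (n + 1) * ((1/2) * (1/2) ^ n / (α * r ^ n * 4 ^ (n+1))) := by
                exact mul_le_mul h_2 hq (norm_nonneg _) (by positivity)
      _ = (1/2) * (1/2) ^ n := by
          field_simp
  exact ⟨u * v, h_1, h_2, h_3, h_4⟩

end CohenAux

/-- Dependent recursion with choice: build a sequence satisfying a step relation. -/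
theorem cohen_exists_seq {X : Type*} (Q : ℕ → X → Prop) (P : ℕ → X → X → Prop) (x0 : X)
    (h0 : Q 0 x0) (hstep : ∀ n x, Q n x → ∃ y, Q (n + 1) y ∧ P n x y) :
    ∃ f : ℕ → X, (∀ n, Q n (f n)) ∧ ∀ n, P n (f n) (f (n + 1)) := by
  let g : ∀ n, {x // Q n x} := fun n =>
    Nat.rec ⟨x0, h0⟩ (fun n p => ⟨(hstep n p.1 p.2).choose, (hstep n p.1 p.2).choose_spec.1⟩) n
  refine ⟨fun n => (g n).1, fun n => (g n).2, fun n => ?_⟩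
  exact (hstep n (g n).1 (g n).2).choose_spec.2

/-- Cohen's factorization theorem: if `A` is a commutative Banach algebra with a bounded
approximate identity `(e i)` and `M` is a Banach `A`-module (with contractive action `act`)
on which the approximate identity acts as an approximate identity, then every element of `M`
factors as `a • m` with `a ∈ A`, `m ∈ M`. -/
theorem stmt2 {A M ι : Type*} [NonUnitalNormedCommRing A] [NormedSpace ℂ A]
    [IsScalarTower ℂ A A] [SMulCommClass ℂ A A] [CompleteSpace A]
    [NormedAddCommGroup M] [NormedSpace ℂ M] [CompleteSpace M]
    (act : A →L[ℂ] M →L[ℂ] M)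
    (hact_mul : ∀ a b : A, act (a * b) = (act a).comp (act b))
    (hact_norm : ∀ (a : A) (m : M), ‖act a m‖ ≤ ‖a‖ * ‖m‖)
    (l : Filter ι) [l.NeBot] (e : ι → A) (C : ℝ) (hC : 0 < C) (he : ∀ i, ‖e i‖ ≤ C)
    (hbai : ∀ a : A, Tendsto (fun i => e i * a) l (nhds a))
    (hmod : ∀ m : M, Tendsto (fun i => act (e i) m) l (nhds m)) :
    ∀ m : M, ∃ (a : A) (m' : M), m = act a m' := by
  intro m
  set α : ℝ := (2 * (C + 1))⁻¹ with hα
  set r : ℝ := 1 - α with hrdef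
  have hCpos : (0:ℝ) < C + 1 := by linarith
  have hα0 : 0 < α := by rw [hα]; positivity
  have hmulα : α * (2 * (C + 1)) = 1 := by
    rw [hα]; exact inv_mul_cancel₀ (by positivity)
  have hαhalf : α < 1 / 2 := by nlinarith
  have hr0 : 0 < r := by rw [hrdef]; linarith
  have hr1 : r < 1 := by rw [hrdef]; linarith
  obtain ⟨F, hQ, hP⟩ := cohen_exists_seq
    (fun n (u : (CohenB A)ˣ) =>
      fstB (↑u : CohenB A) = ((r : ℂ)) ^ n ∧ ‖(↑u⁻¹ : CohenB A)‖ ≤ 4 ^ n)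
    (fun n u u' => ‖sndB (↑u' : CohenB A) - sndB (↑u : CohenB A)‖ ≤ (α * C) * r ^ n ∧
      ‖TB act (↑u'⁻¹ : CohenB A) m - TB act (↑u⁻¹ : CohenB A) m‖ ≤ (1/2) * (1/2) ^ n)
    1
    ⟨by rw [Units.val_one, fstB_one, pow_zero],
     by rw [inv_one, Units.val_one, normB_one, pow_zero]⟩
    (fun n u hu => by
      obtain ⟨u', h1, h2, h3, h4⟩ :=
        cohen_step act hact_mul hact_norm l e C hC he hbai hmod m hα hrdef n u hu.1 hu.2
      exact ⟨u', ⟨h1, h2⟩, h3, h4⟩)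
  have hcb : CauchySeq (fun n => sndB (↑(F n) : CohenB A)) := by
    apply cauchySeq_of_le_geometric r (α * C) hr1
    intro n
    rw [dist_eq_norm, norm_sub_rev]
    exact (hP n).1
  obtain ⟨a, ha⟩ := cauchySeq_tendsto_of_complete hcb
  have hcm : CauchySeq (fun n => TB act (↑(F n)⁻¹ : CohenB A) m) := by
    apply cauchySeq_of_le_geometric (1/2) (1/2) (by norm_num)
    intro n
    rw [dist_eq_norm, norm_sub_rev]
    exact (hP n).2
  obtain ⟨m', hm'⟩ := cauchySeq_tendsto_of_complete hcm
  refine ⟨a, m', ?_⟩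
  have hconst : ∀ n, TB act (↑(F n) : CohenB A) (TB act (↑(F n)⁻¹ : CohenB A) m) = m := by
    intro n
    rw [← TB_mul act hact_mul, Units.mul_inv, TB_one]
  have t1 : Tendsto (fun n : ℕ => ((r : ℂ)) ^ n) atTop (nhds 0) := by
    apply tendsto_pow_atTop_nhds_zero_of_norm_lt_one
    rw [Complex.norm_real, Real.norm_of_nonneg hr0.le]
    exact hr1
  have t1' : Tendsto (fun n : ℕ => ((r : ℂ)) ^ n • (TB act (↑(F n)⁻¹ : CohenB A) m))
      atTop (nhds ((0 : ℂ) • m')) := t1.smul hm'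
  have t2 : Tendsto (fun n : ℕ =>
      act (sndB (↑(F n) : CohenB A)) (TB act (↑(F n)⁻¹ : CohenB A) m))
      atTop (nhds (act a m')) := by
    exact (act.continuous₂.tendsto (a, m')).comp (ha.prodMk_nhds hm')
  have htend : Tendsto (fun n : ℕ => TB act (↑(F n) : CohenB A)
      (TB act (↑(F n)⁻¹ : CohenB A) m)) atTop (nhds (act a m')) := by
    have hsum := t1'.add t2
    rw [zero_smul, zero_add] at hsum
    refine hsum.congr fun n => ?_
    rw [TB_apply act (↑(F n) : CohenB A) (TB act (↑(F n)⁻¹ : CohenB A) m), (hQ n).1]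
  have hfinal : Tendsto (fun _ : ℕ => m) atTop (nhds (act a m')) :=
    htend.congr fun n => hconst n
  exact tendsto_nhds_unique tendsto_const_nhds hfinal
end

section
/- Let G be a group, H a Hilbert space, σ : G → U(H) a unitary representation (as a group homomorphism), V, W : H → K bounded operators into a Hilbert space K, λ : G → U(H) another unitary representation, and f : G → ℂ a function satisfying f(x)·λ(x) = V* σ(x) W for all x ∈ G. Fix a unit vector ξ ∈ H and define L(x) = σ(x⁻¹) V λ(x) ξ and R(x) = σ(x⁻¹) W λ(x) ξ. Then ⟨L(x), R(y)⟩ = f(x y⁻¹) for all x, y ∈ G. -/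
lemma adj_unitary {K : Type*} [NormedAddCommGroup K] [InnerProductSpace ℂ K]
    [CompleteSpace K] (u : unitary (K →L[ℂ] K)) :
    ContinuousLinearMap.adjoint (u : K →L[ℂ] K) = ((u⁻¹ : unitary (K →L[ℂ] K)) : K →L[ℂ] K) := by
  rw [← ContinuousLinearMap.star_eq_adjoint]
  rfl

/-- Let `λ : G → U(H)` and `σ : G → U(K)` be unitary representations, `V, W : H → K` bounded
operators and `f : G → ℂ` with `f(x)·λ(x) = V* σ(x) W` for all `x`.  For a unit vector
`ξ ∈ H`, setting `L(x) = σ(x⁻¹) V λ(x) ξ` and `R(x) = σ(x⁻¹) W λ(x) ξ`, one has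
`⟨L(x), R(y)⟩ = f(x y⁻¹)` for all `x, y ∈ G`. -/
theorem stmt6 {G H K : Type*} [Group G]
    [NormedAddCommGroup H] [InnerProductSpace ℂ H] [CompleteSpace H]
    [NormedAddCommGroup K] [InnerProductSpace ℂ K] [CompleteSpace K]
    (lam : G →* unitary (H →L[ℂ] H)) (sig : G →* unitary (K →L[ℂ] K))
    (V W : H →L[ℂ] K) (f : G → ℂ)
    (hf : ∀ x : G, f x • (lam x : H →L[ℂ] H)
      = (ContinuousLinearMap.adjoint V).comp (((sig x : K →L[ℂ] K)).comp W))
    (ξ : H) (hξ : ‖ξ‖ = 1) :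
    ∀ x y : G,
      (inner ℂ ((sig x⁻¹ : K →L[ℂ] K) (V ((lam x : H →L[ℂ] H) ξ)))
             ((sig y⁻¹ : K →L[ℂ] K) (W ((lam y : H →L[ℂ] H) ξ))) : ℂ)
        = f (x * y⁻¹) := by
  intro x y
  have ha : ((sig x⁻¹ : K →L[ℂ] K)) = ContinuousLinearMap.adjoint (sig x : K →L[ℂ] K) := by
    rw [adj_unitary, ← map_inv]
  have h1 : (inner ℂ ((sig x⁻¹ : K →L[ℂ] K) (V ((lam x : H →L[ℂ] H) ξ)))
      ((sig y⁻¹ : K →L[ℂ] K) (W ((lam y : H →L[ℂ] H) ξ))) : ℂ)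
      = inner ℂ (V ((lam x : H →L[ℂ] H) ξ))
        ((sig (x * y⁻¹) : K →L[ℂ] K) (W ((lam y : H →L[ℂ] H) ξ))) := by
    rw [ha, ContinuousLinearMap.adjoint_inner_left]
    have : ((sig x : K →L[ℂ] K)) ((sig y⁻¹ : K →L[ℂ] K) (W ((lam y : H →L[ℂ] H) ξ)))
        = (sig (x * y⁻¹) : K →L[ℂ] K) (W ((lam y : H →L[ℂ] H) ξ)) := by
      rw [map_mul]
      rfl
    rw [this]
  rw [h1, ← ContinuousLinearMap.adjoint_inner_right]
  have h2 : (ContinuousLinearMap.adjoint V) ((sig (x * y⁻¹) : K →L[ℂ] K)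
      (W ((lam y : H →L[ℂ] H) ξ)))
      = f (x * y⁻¹) • (lam (x * y⁻¹) : H →L[ℂ] H) ((lam y : H →L[ℂ] H) ξ) := by
    have := congrArg (fun T : H →L[ℂ] H => T ((lam y : H →L[ℂ] H) ξ)) (hf (x * y⁻¹))
    simpa using this.symm
  rw [h2]
  have h3 : (lam (x * y⁻¹) : H →L[ℂ] H) ((lam y : H →L[ℂ] H) ξ) = (lam x : H →L[ℂ] H) ξ := by
    have h := congrArg (fun u : unitary (H →L[ℂ] H) => (u : H →L[ℂ] H) ξ)
      (map_mul lam (x * y⁻¹) y)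
    simp only [inv_mul_cancel_right] at h
    exact h.symm
  rw [h3, inner_smul_right, inner_self_eq_norm_sq_to_K, Unitary.norm_map, hξ]
  norm_num
end
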